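/- Let μ be a probability measure on ℝ with continuous strictly increasing CDF F and quantile function Q = F⁻¹ : (0,1) → ℝ. Suppose Q is differentiable on (u₀, 1) for some u₀ < 1 and that for some α > 0 there is c ∈ (0, ∞) with lim_{u→1⁻} Q'(u)·(1−u)^α = c. Then α < 1 if and only if lim_{u→1⁻} Q(u) is finite (equivalently, if and only if the support of μ is bounded above). -/

import Mathlib

open MeasureTheory Filter Topology Set

/-- Let `μ` be a probability measure on ℝ with continuous strictly
increasing CDF `F` and quantile function `Q = F⁻¹ : (0,1) → ℝ`. If `Q` is
differentiable on `(u₀, 1)` and for some tail exponent `α > 0` one has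
`lim_{u→1⁻} Q'(u)·(1−u)^α = c ∈ (0, ∞)`, then `α < 1` iff `lim_{u→1⁻} Q(u)` is
finite (i.e. the support of `μ` is bounded above). -/
theorem tail_exponent_lt_one_iff_bounded_support
    (μ : Measure ℝ) [IsProbabilityMeasure μ] (Q : ℝ → ℝ) (u₀ α c : ℝ)
    (hF_cont : Continuous fun x => (μ (Set.Iic x)).toReal)
    (hF_mono : StrictMono fun x => (μ (Set.Iic x)).toReal)
    (hQ : ∀ u ∈ Set.Ioo (0:ℝ) 1, (μ (Set.Iic (Q u))).toReal = u)
    (hu₀ : u₀ < 1)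
    (hQ_diff : ∀ u ∈ Set.Ioo u₀ 1, DifferentiableAt ℝ Q u)
    (hα : 0 < α) (hc : 0 < c)
    (hlim : Tendsto (fun u => deriv Q u * (1 - u) ^ α) (𝓝[<] (1:ℝ)) (𝓝 c)) :
    α < 1 ↔ ∃ L : ℝ, Tendsto Q (𝓝[<] (1:ℝ)) (𝓝 L) := by
  -- Q is strictly monotone on (0,1)
  have hQmono : StrictMonoOn Q (Ioo (0:ℝ) 1) := by
    intro u hu v hv huv
    have h : (fun x => (μ (Set.Iic x)).toReal) (Q u) < (fun x => (μ (Set.Iic x)).toReal) (Q v) := by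
      simpa [hQ u hu, hQ v hv] using huv
    exact hF_mono.lt_iff_lt.mp h
  -- eventual two-sided bound on the derivative
  have hball : {u : ℝ | deriv Q u * (1-u)^α ∈ Ioo (c/2) (2*c)} ∈ 𝓝[<] (1:ℝ) :=
    hlim (Ioo_mem_nhds (by linarith) (by linarith))
  obtain ⟨a₁, ha₁, hsub⟩ := mem_nhdsLT_iff_exists_Ioo_subset.mp hball
  set a : ℝ := max (max a₁ u₀) (1/2) with ha_def
  have ha1 : a < 1 := max_lt (max_lt ha₁ hu₀) (by norm_num)
  have ha_half : (1:ℝ)/2 ≤ a := le_max_right _ _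
  have key : ∀ u ∈ Ioo a 1, 0 < 1 - u ∧ 0 < (1-u)^α ∧
      c/2 < deriv Q u * (1-u)^α ∧ deriv Q u * (1-u)^α < 2*c ∧
      DifferentiableAt ℝ Q u ∧ u ∈ Ioo (0:ℝ) 1 := by
    intro u hu
    have h1u : 0 < 1 - u := by linarith [hu.2]
    have hub : u ∈ Ioo a₁ 1 := ⟨lt_of_le_of_lt (le_trans (le_max_left _ _) (le_max_left _ _)) hu.1, hu.2⟩
    have hbd := hsub hub
    refine ⟨h1u, Real.rpow_pos_of_pos h1u α, hbd.1, hbd.2, ?_, ?_⟩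
    · exact hQ_diff u ⟨lt_of_le_of_lt (le_trans (le_max_right _ _) (le_max_left _ _)) hu.1, hu.2⟩
    · exact ⟨by linarith [hu.1], hu.2⟩
  set b : ℝ := (a+1)/2 with hb_def
  have hab : a < b := by simp only [hb_def]; linarith
  have hb1 : b < 1 := by simp only [hb_def]; linarith
  have hbmem : b ∈ Ioo a 1 := ⟨hab, hb1⟩
  have hIoo_sub : Ioo b 1 ⊆ Ioo a 1 := Ioo_subset_Ioo_left hab.le
  constructor
  · -- α < 1 ⇒ Q bounded and monotone ⇒ limit exists
    intro hα1
    set p : ℝ := 1 - α with hp_def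
    have hp0 : 0 < p := by linarith
    set h : ℝ → ℝ := fun u => -(2*c/p) * (1-u)^p with hh_def
    have hd : ∀ u ∈ Ioo a 1, HasDerivAt h (2*c / (1-u)^α) u := by
      intro u hu
      obtain ⟨h1u, hpow, _, _, _, _⟩ := key u hu
      have H0 : HasDerivAt (fun x : ℝ => 1 - x) (-1) u := by
        simpa using (hasDerivAt_id u).const_sub 1
      have H : HasDerivAt (fun x : ℝ => (1-x)^p) (-1 * p * (1-u)^(p-1)) u :=
        H0.rpow_const (Or.inl h1u.ne')
      have H2 := H.const_mul (-(2*c/p))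
      refine H2.congr_deriv ?_
      have hpe : (1-u)^(p-1) = ((1-u)^α)⁻¹ := by
        rw [show p - 1 = -α by rw [hp_def]; ring, Real.rpow_neg h1u.le]
      rw [hpe]
      field_simp
    have hgmono : StrictMonoOn (fun u => h u - Q u) (Ioo a 1) := by
      apply strictMonoOn_of_deriv_pos (convex_Ioo a 1)
      · intro u hu
        obtain ⟨_, _, _, _, hdiff, _⟩ := key u hu
        exact ((hd u hu).differentiableAt.sub hdiff).continuousAt.continuousWithinAt
      · intro u hu
        rw [interior_Ioo] at hu
        obtain ⟨h1u, hpow, _, hlt, hdiff, _⟩ := key u hu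
        rw [deriv_fun_sub (hd u hu).differentiableAt hdiff, (hd u hu).deriv]
        have hQd : deriv Q u < 2*c / (1-u)^α := (lt_div_iff₀ hpow).mpr hlt
        linarith
    -- boundedness
    have hQb : ∀ u ∈ Ioo b 1, Q u ≤ Q b - h b := by
      intro u hu
      have hmono := hgmono hbmem (hIoo_sub hu) hu.1
      have hh_nonpos : h u ≤ 0 := by
        have : (0:ℝ) ≤ (1-u)^p := Real.rpow_nonneg (by linarith [hu.2]) p
        have h2cp : 0 < 2*c/p := by positivity
        simp only [hh_def]
        nlinarith
      simp only at hmono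
      linarith
    have hmonoQ : MonotoneOn Q (Ioo b 1) := by
      apply (hQmono.mono ?_).monotoneOn
      intro u hu
      exact ⟨by linarith [hu.1, hab, ha_half], hu.2⟩
    have hbdd : BddAbove (Q '' Ioo b 1) := by
      refine ⟨Q b - h b, ?_⟩
      rintro y ⟨u, hu, rfl⟩
      exact hQb u hu
    exact ⟨_, MonotoneOn.tendsto_nhdsWithin_Ioo_left (nonempty_Ioo.mpr hb1) hmonoQ hbdd⟩
  · -- limit exists ⇒ α < 1
    rintro ⟨L, hL⟩
    by_contra hα1
    push_neg at hα1
    set g : ℝ → ℝ := fun u => Q u + (c/2) * Real.log (1-u) with hg_def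
    have hdlog : ∀ u ∈ Ioo a 1, HasDerivAt (fun x : ℝ => (c/2) * Real.log (1-x)) ((c/2) * ((1-u)⁻¹ * (-1))) u := by
      intro u hu
      obtain ⟨h1u, _, _, _, _, _⟩ := key u hu
      have H0 : HasDerivAt (fun x : ℝ => 1 - x) (-1) u := by
        simpa using (hasDerivAt_id u).const_sub 1
      exact ((Real.hasDerivAt_log h1u.ne').comp u H0).const_mul (c/2)
    have hgmono : MonotoneOn g (Ioo a 1) := by
      apply monotoneOn_of_deriv_nonneg (convex_Ioo a 1)
      · intro u hu
        obtain ⟨_, _, _, _, hdiff, _⟩ := key u hu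
        exact (hdiff.add (hdlog u hu).differentiableAt).continuousAt.continuousWithinAt
      · intro u hu
        rw [interior_Ioo] at hu
        obtain ⟨_, _, _, _, hdiff, _⟩ := key u hu
        exact (hdiff.add (hdlog u hu).differentiableAt).differentiableWithinAt
      · intro u hu
        rw [interior_Ioo] at hu
        obtain ⟨h1u, hpow, hgt, _, hdiff, _⟩ := key u hu
        rw [deriv_fun_add hdiff (hdlog u hu).differentiableAt, (hdlog u hu).deriv]
        have hQd : c/2 / (1-u)^α < deriv Q u := (div_lt_iff₀ hpow).mpr (by linarith)
        have hple : (1-u)^α ≤ 1 - u := by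
          calc (1-u)^α ≤ (1-u)^(1:ℝ) :=
                Real.rpow_le_rpow_of_exponent_ge h1u (by linarith [hu.1, ha_half]) hα1
            _ = 1 - u := Real.rpow_one _
        have hdiv : c/2 / (1-u) ≤ c/2 / (1-u)^α := by
          apply div_le_div_of_nonneg_left (by positivity) hpow hple
        have : (c/2) * ((1-u)⁻¹ * (-1)) = -(c/2 / (1-u)) := by field_simp
        rw [this]
        linarith
    -- Q tends to atTop, contradiction
    have T1 : Tendsto (fun u : ℝ => 1 - u) (𝓝[<] (1:ℝ)) (𝓝[>] (0:ℝ)) := by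
      apply tendsto_nhdsWithin_of_tendsto_nhds_of_eventually_within
      · have : Tendsto (fun u : ℝ => 1 - u) (𝓝 (1:ℝ)) (𝓝 (1-1)) :=
          tendsto_const_nhds.sub tendsto_id
        simpa using this.mono_left nhdsWithin_le_nhds
      · filter_upwards [self_mem_nhdsWithin] with u hu
        simp only [mem_Iio] at hu
        simpa using hu
    have T2 : Tendsto (fun u : ℝ => Real.log (1-u)) (𝓝[<] (1:ℝ)) atBot :=
      Real.tendsto_log_nhdsGT_zero.comp T1
    have T4 : Tendsto (fun u : ℝ => -Real.log (1-u)) (𝓝[<] (1:ℝ)) atTop :=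
      tendsto_neg_atBot_atTop.comp T2
    have T5 : Tendsto (fun u : ℝ => (c/2) * -Real.log (1-u)) (𝓝[<] (1:ℝ)) atTop :=
      T4.const_mul_atTop (by positivity)
    have T6 : Tendsto (fun u : ℝ => g b + (c/2) * -Real.log (1-u)) (𝓝[<] (1:ℝ)) atTop :=
      tendsto_atTop_add_const_left _ (g b) T5
    have hev : ∀ᶠ u in 𝓝[<] (1:ℝ), g b + (c/2) * -Real.log (1-u) ≤ Q u := by
      filter_upwards [Ioo_mem_nhdsLT hb1] with u hu
      have := hgmono hbmem (hIoo_sub hu) hu.1.le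
      simp only [hg_def] at this ⊢
      linarith
    have TQ : Tendsto Q (𝓝[<] (1:ℝ)) atTop := tendsto_atTop_mono' _ hev T6
    exact not_tendsto_nhds_of_tendsto_atTop TQ L hL
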